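/- Let G be a strongly connected digraph with a fixed start vertex s, and suppose the bridge (u,v) of the flow graph G_s is locally canceled by the insertion of an edge (x,y), i.e., (u,v) is not a bridge of (G+(x,y))_s and v is not affected by the insertion. Then (u,v) is not a strong bridge of the digraph G+(x,y). -/

import Mathlib

/-!  Basic notions for finite directed graphs given by an edge set `E : Set (V × V)`. -/

variable {V : Type*}

/-- A path from `u` to `v`: a nonempty list of vertices starting at `u`, ending at `v`,
in which every pair of consecutive vertices is an edge. -/
def IsPath (E : Set (V × V)) (u v : V) (p : List V) : Prop :=
  p.Chain' (fun a b => (a, b) ∈ E) ∧ p.head? = some u ∧ p.getLast? = some v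

/-- `v` is reachable from `u` by a path. -/
def Reach (E : Set (V × V)) (u v : V) : Prop := ∃ p, IsPath E u v p

/-- Every vertex reaches every other vertex. -/
def StronglyConnected (E : Set (V × V)) : Prop := ∀ u v, Reach E u v

/-- An edge `e` is a strong bridge if its removal destroys strong connectivity. -/
def StrongBridge (E : Set (V × V)) (e : V × V) : Prop :=
  e ∈ E ∧ ¬ StronglyConnected (E \ {e})

/-- `u` dominates `v` in the flow graph with start vertex `s`:
every path from `s` to `v` contains `u`. -/
def Dominates (E : Set (V × V)) (s u v : V) : Prop :=
  ∀ p, IsPath E s v p → u ∈ p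

/-- An edge `e = (e.1, e.2)` is a bridge of the flow graph `G_s`:
every path from `s` to `e.2` contains the edge `e`. -/
def FlowBridge (E : Set (V × V)) (s : V) (e : V × V) : Prop :=
  e ∈ E ∧ ∀ p, IsPath E s e.2 p → [e.1, e.2] <:+: p

/-- The reverse digraph: all edges reversed. -/
def rev (E : Set (V × V)) : Set (V × V) := {e | (e.2, e.1) ∈ E}

/-- `D(v)`: the set of vertices dominated by `v` in `G_s`. -/
def Dset (E : Set (V × V)) (s v : V) : Set V := {w | Dominates E s v w}

/-- Reachability inside the induced subgraph `G[S]`: a path all of whose vertices lie in `S`. -/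
def ReachableIn (E : Set (V × V)) (S : Set V) (u v : V) : Prop :=
  ∃ p, IsPath E u v p ∧ ∀ w ∈ p, w ∈ S

/-- `C` is a strongly connected component of the induced subgraph `G[S]`. -/
def SCCIn (E : Set (V × V)) (S : Set V) (C : Set V) : Prop :=
  C.Nonempty ∧ C ⊆ S ∧
  (∀ u ∈ C, ∀ v ∈ C, ReachableIn E S u v) ∧
  (∀ v ∈ S, ∀ u ∈ C, ReachableIn E S u v → ReachableIn E S v u → v ∈ C)

/-- A bridge-dominated component: an SCC of `G[D(v)]` for some bridge `(u,v)` of `G_s`. -/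
def BridgeDomComponent (E : Set (V × V)) (s : V) (C : Set V) : Prop :=
  ∃ u v, FlowBridge E s (u, v) ∧ SCCIn E (Dset E s v) C

/-- The set of edges used by a path `p`. -/
def pathEdges (p : List V) : Set (V × V) := {e | [e.1, e.2] <:+: p}

/-- `u` and `v` are `2`-edge-connected: there are two edge-disjoint paths from `u` to `v`
and two edge-disjoint paths from `v` to `u`. -/
def TwoEdgeConnected (E : Set (V × V)) (u v : V) : Prop :=
  (∃ p q, IsPath E u v p ∧ IsPath E u v q ∧ pathEdges p ∩ pathEdges q = ∅) ∧
  (∃ p q, IsPath E v u p ∧ IsPath E v u q ∧ pathEdges p ∩ pathEdges q = ∅)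

/-- `u` is the immediate dominator of `v` in `G_s`: a proper dominator of `v`
dominated by every proper dominator of `v`. -/
def ImmDom (E : Set (V × V)) (s u v : V) : Prop :=
  Dominates E s u v ∧ u ≠ v ∧
  ∀ w, Dominates E s w v → w ≠ v → Dominates E s w u

/-- `depth v = |Dom(v)|`, the number of dominators of `v` in `G_s`. -/
noncomputable def depth (E : Set (V × V)) (s v : V) : ℕ :=
  {u | Dominates E s u v}.ncard

/-- `z` is the nearest common ancestor of `x` and `y` in the dominator tree of `G_s`:
a common dominator of `x` and `y` dominated by every common dominator. -/
def IsNCA (E : Set (V × V)) (s x y z : V) : Prop :=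
  Dominates E s z x ∧ Dominates E s z y ∧
  ∀ w, Dominates E s w x → Dominates E s w y → Dominates E s w z

/-- `r` is the bridge-decomposition root of `v` in `G_s`: the deepest dominator `r`
of `v` such that `r = s` or `(d(r), r)` is a bridge of `G_s`. -/
def IsBDRoot (E : Set (V × V)) (s v r : V) : Prop :=
  Dominates E s r v ∧
  (r = s ∨ ∃ u, ImmDom E s u r ∧ FlowBridge E s (u, r)) ∧
  ∀ r', Dominates E s r' v →
    (r' = s ∨ ∃ u', ImmDom E s u' r' ∧ FlowBridge E s (u', r')) →
    Dominates E s r' r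

section Helpers

variable {E₀ : Set (V × V)} {a b w : V}

lemma isPath_ne_nil {p : List V} (h : IsPath E₀ a b p) : p ≠ [] := by
  intro hn; rw [hn] at h; simp [IsPath] at h

lemma path_prefix {l₁ l₂ : List V} (h : IsPath E₀ a b (l₁ ++ w :: l₂)) :
    IsPath E₀ a w (l₁ ++ [w]) := by
  obtain ⟨hc, hh, hl⟩ := h
  refine ⟨hc.prefix ⟨l₂, by simp⟩, ?_, ?_⟩
  · cases l₁ <;> simpa using hh
  · simpa using List.getLast?_append_cons l₁ w []

lemma path_suffix {l₁ l₂ : List V} (h : IsPath E₀ a b (l₁ ++ w :: l₂)) :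
    IsPath E₀ w b (w :: l₂) := by
  obtain ⟨hc, hh, hl⟩ := h
  exact ⟨hc.suffix ⟨l₁, rfl⟩, rfl, by rwa [List.getLast?_append_cons] at hl⟩

lemma path_snoc {p : List V} (h : IsPath E₀ a b p) (he : (b, w) ∈ E₀) :
    IsPath E₀ a w (p ++ [w]) := by
  obtain ⟨hc, hh, hl⟩ := h
  refine ⟨List.IsChain.append hc (by simp) ?_, ?_, ?_⟩
  · intro x hx y hy
    simp at hy; subst hy
    rw [hl] at hx; simp at hx; subst hx; exact he
  · exact List.mem_head?_append_of_mem_head? hh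
  · rw [List.getLast?_append_of_ne_nil _ (by simp)]; rfl

lemma path_dedup {l₁ l₂ : List V} (h : IsPath E₀ a b (l₁ ++ w :: w :: l₂)) :
    IsPath E₀ a b (l₁ ++ w :: l₂) := by
  obtain ⟨hc, hh, hl⟩ := h
  rw [List.Chain', List.isChain_append] at hc
  obtain ⟨h1, h2, h3⟩ := hc
  rw [List.isChain_cons] at h2
  refine ⟨List.isChain_append.2 ⟨h1, h2.2, ?_⟩, ?_, ?_⟩
  · simpa using h3
  · cases l₁ <;> simpa using hh
  · rw [List.getLast?_append_cons] at hl ⊢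
    rwa [show w :: w :: l₂ = [w] ++ w :: l₂ from rfl, List.getLast?_append_cons] at hl

lemma exists_min_path (h : Reach E₀ a b) :
    ∃ p, IsPath E₀ a b p ∧ ∀ q, IsPath E₀ a b q → p.length ≤ q.length := by
  classical
  obtain ⟨p0, hp0⟩ := h
  have hex : ∃ n, ∃ p, IsPath E₀ a b p ∧ p.length = n := ⟨_, p0, hp0, rfl⟩
  obtain ⟨p, hp, hlen⟩ := Nat.find_spec hex
  exact ⟨p, hp, fun q hq => hlen ▸ Nat.find_min' hex ⟨q, hq, rfl⟩⟩

lemma rtg_of_path {p : List V} : ∀ {a}, IsPath E₀ a b p →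
    Relation.ReflTransGen (fun c d => (c, d) ∈ E₀) a b := by
  induction p with
  | nil => intro a h; exact absurd rfl (isPath_ne_nil h)
  | cons c t ih =>
    intro a h
    obtain ⟨hc, hh, hl⟩ := h
    simp at hh; subst hh
    cases t with
    | nil => simp at hl; subst hl; exact .refl
    | cons d t' =>
      rw [List.Chain', List.isChain_cons_cons] at hc
      exact .head hc.1 (ih ⟨hc.2, rfl, by simpa using hl⟩)

lemma reach_of_rtg (h : Relation.ReflTransGen (fun c d => (c, d) ∈ E₀) a b) :
    Reach E₀ a b := by
  induction h with
  | refl => exact ⟨[a], by simp [IsPath, List.Chain']⟩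
  | tail _ hstep ih =>
    obtain ⟨p, hp⟩ := ih
    exact ⟨_, path_snoc hp hstep⟩

lemma dom_antisymm (hreach : Reach E₀ b a)
    (hab : Dominates E₀ b w a) (hba : Dominates E₀ b a w) : w = a := by
  by_contra hne
  obtain ⟨p, hp, hmin⟩ := exists_min_path hreach
  have hw : w ∈ p := hab p hp
  obtain ⟨l₁, l₂, rfl⟩ := List.append_of_mem hw
  have hpre : IsPath E₀ b w (l₁ ++ [w]) := path_prefix hp
  have ha : a ∈ l₁ ++ [w] := hba _ hpre
  rcases List.mem_append.mp ha with h1 | h2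
  · obtain ⟨r₁, r₂, rfl⟩ := List.append_of_mem h1
    have hp' : IsPath E₀ b a (r₁ ++ a :: (r₂ ++ w :: l₂)) := by
      rw [show r₁ ++ a :: (r₂ ++ w :: l₂) = (r₁ ++ a :: r₂) ++ w :: l₂ by simp]
      exact hp
    have := hmin _ (path_prefix hp')
    simp [List.length_append] at this
  · simp at h2; exact hne h2.symm

lemma chain'_diff {u v : V} : ∀ {l : List V},
    l.Chain' (fun c d => (c, d) ∈ E₀) → ¬ ([u, v] <:+: l) →
    l.Chain' (fun c d => (c, d) ∈ E₀ \ {(u, v)}) := by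
  intro l
  induction l with
  | nil => simp [List.Chain']
  | cons c t ih =>
    cases t with
    | nil => simp [List.Chain']
    | cons d t' =>
      intro hc hn
      rw [List.Chain', List.isChain_cons_cons] at hc ⊢
      refine ⟨⟨hc.1, ?_⟩, ih hc.2 (fun h => hn (List.infix_cons h))⟩
      simp only [Set.mem_singleton_iff, Prod.mk.injEq, not_and]
      intro h1 h2
      exact hn ⟨[], t', by simp [h1, h2]⟩

end Helpers

/-- if the bridge `(u,v)` of `G_s` is locally canceled by the insertion
of `(x,y)` (it is canceled and `v` is not affected, i.e. `v` keeps its immediate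
dominator `dv`), then `(u,v)` is not a strong bridge of `G+(x,y)`. -/
theorem stmt9 {V : Type*} (E : Set (V × V)) (s u v x y dv : V)
    (hSC : StronglyConnected E)
    (hbr : FlowBridge E s (u, v))
    (hcanc : ¬ FlowBridge (insert (x, y) E) s (u, v))
    (hdv : ImmDom E s dv v) (hdv' : ImmDom (insert (x, y) E) s dv v) :
    ¬ StrongBridge (insert (x, y) E) (u, v) := by

  set E' := insert (x, y) E with hE'
  -- u ≠ v
  have hne_uv : u ≠ v := by
    intro h
    obtain ⟨p, hp, hmin⟩ := exists_min_path (hSC s v)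
    obtain ⟨l₁, l₂, hsp⟩ := hbr.2 p hp
    subst h
    have hp' : IsPath E s u (l₁ ++ u :: u :: l₂) := by
      rw [show l₁ ++ u :: u :: l₂ = l₁ ++ [u, u] ++ l₂ by simp, hsp]; exact hp
    have h1 := hmin _ (path_dedup hp')
    rw [← hsp] at h1
    simp [List.length_append] at h1
  have hdomuv : Dominates E s u v := fun p hp => (hbr.2 p hp).subset (by simp)
  have himm : ImmDom E s u v := by
    refine ⟨hdomuv, hne_uv, fun w hw hwv q hq => ?_⟩
    have hq' : IsPath E s v (q ++ [v]) := path_snoc hq hbr.1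
    rcases List.mem_append.mp (hw _ hq') with h | h
    · exact h
    · simp at h; exact absurd h hwv
  have hdvu : dv = u :=
    dom_antisymm (hSC s u) (himm.2.2 dv hdv.1 hdv.2.1) (hdv.2.2 u hdomuv hne_uv)
  -- a path s → v in E' avoiding the edge (u, v)
  have hmem' : (u, v) ∈ E' := Set.mem_insert_iff.2 (Or.inr hbr.1)
  have h2 : ¬ ∀ p, IsPath E' s v p → [u, v] <:+: p := fun h => hcanc ⟨hmem', h⟩
  push_neg at h2
  obtain ⟨p, hp, hnin⟩ := h2
  have hup : u ∈ p := by
    have hd := hdv'.1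
    rw [hdvu] at hd
    exact hd p hp
  obtain ⟨l₁, l₂, rfl⟩ := List.append_of_mem hup
  have hq : IsPath E' u v (u :: l₂) := path_suffix hp
  have hnin' : ¬ [u, v] <:+: (u :: l₂) := fun h =>
    hnin (h.trans (List.IsSuffix.isInfix ⟨l₁, rfl⟩))
  have hqD : IsPath (E' \ {(u, v)}) u v (u :: l₂) :=
    ⟨chain'_diff hq.1 hnin', hq.2.1, hq.2.2⟩
  have huvD : Relation.ReflTransGen (fun c d => (c, d) ∈ E' \ {(u, v)}) u v :=
    rtg_of_path hqD
  rintro ⟨-, hns⟩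
  apply hns
  intro a b
  apply reach_of_rtg
  obtain ⟨q, hq'⟩ := hSC a b
  have hE'r : Relation.ReflTransGen (fun c d => (c, d) ∈ E') a b :=
    Relation.ReflTransGen.mono (r := fun c d => (c, d) ∈ E) (p := fun c d => (c, d) ∈ E')
      (fun c d h => Set.mem_insert_iff.2 (Or.inr h)) a b (rtg_of_path hq')
  clear hq' hq
  induction hE'r with
  | refl => exact .refl
  | tail hab' hbc ih =>
    rename_i b' c
    by_cases h : (b', c) = (u, v)
    · rw [Prod.ext_iff] at h
      obtain ⟨h1, h2⟩ := h
      subst h1; subst h2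
      exact ih.trans huvD
    · exact ih.tail ⟨hbc, by simpa using h⟩
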